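/- There is no single function f : ℕ → ℝ with f tending to infinity (non-decreasing, non-negative) such that for all γ ∈ (0,1), every cluster of size n in every CPM(γ)-optimal clustering has minimum edge cut size strictly greater than f(n). In particular, for every n there exists γ ∈ (0,1) and a network with a CPM(γ)-optimal clustering containing a cluster of size ≥ n with a cut edge. -/

import Mathlib

open Finset
open scoped Classical
open Fin.NatCast

/-- Edges of `E` lying inside the vertex set `c`. -/
noncomputable def inEdges {V : Type*} [DecidableEq V]
    (E : Finset (Sym2 V)) (c : Finset V) : Finset (Sym2 V) :=
  E.filter (fun e => ∀ v ∈ e, v ∈ c)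

/-- The CPM(γ) score of a clustering `P` of the graph with edge set `E`. -/
noncomputable def cpm {V : Type*} [Fintype V] [DecidableEq V] (γ : ℝ)
    (E : Finset (Sym2 V)) (P : Finpartition (univ : Finset V)) : ℝ :=
  ∑ c ∈ P.parts, (((inEdges E c).card : ℝ) - γ * (c.card.choose 2))


/-- The edges of `E` crossing between `A` and `B`. -/
noncomputable def cutEdges {V : Type*} [DecidableEq V]
    (E : Finset (Sym2 V)) (A B : Finset V) : Finset (Sym2 V) :=
  E.filter (fun e => ∃ u ∈ A, ∃ v ∈ B, e = s(u, v))

noncomputable def pathE (m : ℕ) : Finset (Sym2 (Fin (m+2))) :=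
  (Finset.range (m+1)).image
    (fun i => s(((i : ℕ) : Fin (m+2)), (((i+1 : ℕ) : ℕ) : Fin (m+2))))

lemma mem_pathE {m : ℕ} {e : Sym2 (Fin (m+2))} :
    e ∈ pathE m ↔ ∃ i ≤ m, e = s(((i : ℕ) : Fin (m+2)), (((i+1 : ℕ) : ℕ) : Fin (m+2))) := by
  simp [pathE, Nat.lt_succ_iff, eq_comm]

lemma mem_inEdges {V : Type*} [DecidableEq V] {E : Finset (Sym2 V)} {c : Finset V}
    {e : Sym2 V} : e ∈ inEdges E c ↔ e ∈ E ∧ ∀ v ∈ e, v ∈ c := by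
  simp [inEdges]

lemma inEdges_univ {V : Type*} [Fintype V] [DecidableEq V] (E : Finset (Sym2 V)) :
    inEdges E (univ : Finset V) = E := by
  ext e; simp [mem_inEdges]

lemma sum_card_inEdges_le {m : ℕ} (E : Finset (Sym2 (Fin m)))
    (P : Finpartition (univ : Finset (Fin m)))
    (e0 : Sym2 (Fin m)) (he0 : e0 ∈ E)
    (hcross : ∀ c ∈ P.parts, e0 ∉ inEdges E c) :
    ∑ c ∈ P.parts, (inEdges E c).card ≤ E.card - 1 := by
  have hdisj : ∀ c ∈ P.parts, ∀ c' ∈ P.parts, c ≠ c' →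
      Disjoint (inEdges E c) (inEdges E c') := by
    intro c hc c' hc' hne
    rw [Finset.disjoint_left]
    intro e he he'
    rw [mem_inEdges] at he he'
    have hv : e.out.1 ∈ e := Sym2.out_fst_mem e
    exact (Finset.disjoint_left.mp (P.disjoint hc hc' hne) (he.2 _ hv)) (he'.2 _ hv)
  rw [← Finset.card_biUnion hdisj]
  have hsub : P.parts.biUnion (inEdges E) ⊆ E.erase e0 := by
    intro e he
    rw [mem_biUnion] at he
    obtain ⟨c, hc, hec⟩ := he
    refine mem_erase.mpr ⟨?_, (mem_inEdges.mp hec).1⟩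
    rintro rfl
    exact hcross c hc hec
  calc (P.parts.biUnion (inEdges E)).card ≤ (E.erase e0).card := card_le_card hsub
    _ = E.card - 1 := card_erase_of_mem he0

lemma cpm_indiscrete {m : ℕ} (γ : ℝ) (E : Finset (Sym2 (Fin (m+2)))) :
    cpm γ E (Finpartition.indiscrete (Finset.univ_nonempty.ne_empty)) =
      (E.card : ℝ) - γ * ((m+2).choose 2) := by
  simp [cpm, Finpartition.indiscrete_parts, inEdges_univ, card_univ]

lemma indiscrete_opt {m : ℕ} (γ : ℝ) (hγ0 : 0 ≤ γ)
    (hγ : γ * ((m+2).choose 2) ≤ 1)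
    (P : Finpartition (univ : Finset (Fin (m+2)))) :
    cpm γ (pathE m) P ≤
      cpm γ (pathE m) (Finpartition.indiscrete (Finset.univ_nonempty.ne_empty)) := by
  have hle : cpm γ (pathE m) P ≤ ∑ c ∈ P.parts, ((inEdges (pathE m) c).card : ℝ) := by
    refine Finset.sum_le_sum fun c _ => ?_
    have : 0 ≤ γ * (c.card.choose 2 : ℝ) := by positivity
    linarith
  by_cases h : (univ : Finset (Fin (m+2))) ∈ P.parts
  · have hparts : P.parts = {univ} := by
      apply Finset.eq_singleton_iff_unique_mem.mpr
      refine ⟨h, fun c hc => ?_⟩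
      by_contra hne
      have hd := P.disjoint hc h hne
      obtain ⟨x, hx⟩ := P.nonempty_of_mem_parts hc
      exact (Finset.disjoint_left.mp hd hx) (mem_univ x)
    apply le_of_eq
    unfold cpm
    rw [hparts, Finpartition.indiscrete_parts]
  · obtain ⟨c, hc, h0⟩ := P.exists_mem (mem_univ (0 : Fin (m+2)))
    have hcne : c ≠ univ := fun h' => h (h' ▸ hc)
    have hne : ((univ : Finset (Fin (m+2))) \ c).Nonempty := by
      rw [sdiff_nonempty]
      exact fun hsub => hcne ((univ_subset_iff.mp hsub))
    set j := ((univ : Finset (Fin (m+2))) \ c).min' hne with hj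
    have hjc : j ∉ c := (mem_sdiff.mp (min'_mem _ hne)).2
    have hj0 : j ≠ 0 := fun h => hjc (h ▸ h0)
    have hjval : 1 ≤ (j : ℕ) := by
      rcases Nat.eq_zero_or_pos (j : ℕ) with h' | h'
      · exact absurd (Fin.ext h' : j = 0) hj0
      · exact h'
    have hjlt : (j : ℕ) < m + 2 := j.isLt
    set a : Fin (m+2) := (((j : ℕ) - 1 : ℕ) : Fin (m+2)) with ha
    have hav : (a : ℕ) = (j : ℕ) - 1 := Fin.val_cast_of_lt (by omega)
    have haj : a < j := by
      rw [Fin.lt_def, hav]; omega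
    have hac : a ∈ c := by
      by_contra hac
      exact absurd haj (not_lt.mpr (min'_le _ _ (mem_sdiff.mpr ⟨mem_univ _, hac⟩)))
    have he0E : s(a, j) ∈ pathE m := by
      rw [mem_pathE]
      refine ⟨(j : ℕ) - 1, by omega, ?_⟩
      have : ((j : ℕ) - 1) + 1 = (j : ℕ) := by omega
      rw [this, Fin.cast_val_eq_self]
    have hcross : ∀ c' ∈ P.parts, s(a, j) ∉ inEdges (pathE m) c' := by
      intro c' hc' hmem
      rw [mem_inEdges] at hmem
      have ha' : a ∈ c' := hmem.2 a (Sym2.mem_mk_left _ _)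
      have hj' : j ∈ c' := hmem.2 j (Sym2.mem_mk_right _ _)
      by_cases hcc : c' = c
      · exact hjc (hcc ▸ hj')
      · exact (Finset.disjoint_left.mp (P.disjoint hc' hc hcc) ha') hac
    have hsum := sum_card_inEdges_le _ P _ he0E hcross
    have h1 : 1 ≤ (pathE m).card := card_pos.mpr ⟨_, he0E⟩
    have hsumR : ∑ c ∈ P.parts, ((inEdges (pathE m) c).card : ℝ) ≤ ((pathE m).card : ℝ) - 1 := by
      have := (Nat.cast_le (α := ℝ)).mpr hsum
      rw [Nat.cast_sub h1, Nat.cast_sum] at this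
      exact_mod_cast this
    rw [cpm_indiscrete]
    linarith

lemma pathE_not_diag {m : ℕ} : ∀ e ∈ pathE m, ¬ e.IsDiag := by
  intro e he
  rw [mem_pathE] at he
  obtain ⟨i, hi, rfl⟩ := he
  rw [Sym2.mk_isDiag_iff]
  intro hcon
  have h1 : ((i : Fin (m+2)) : ℕ) = i := Fin.val_cast_of_lt (by omega)
  have h2 : (((i+1 : ℕ) : Fin (m+2)) : ℕ) = i + 1 := Fin.val_cast_of_lt (by omega)
  have := congrArg Fin.val hcon
  omega

lemma cutEdges_path {m : ℕ} :
    cutEdges (pathE m) {(0 : Fin (m+2))} (univ \ {0}) = {s((0 : Fin (m+2)), 1)} := by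
  ext e
  simp only [cutEdges, mem_filter, mem_singleton, mem_sdiff, mem_univ, true_and]
  constructor
  · rintro ⟨he, u, hu, v, hv, rfl⟩
    subst hu
    rw [mem_pathE] at he
    obtain ⟨i, hi, hei⟩ := he
    have h1 : ((i : Fin (m+2)) : ℕ) = i := Fin.val_cast_of_lt (by omega)
    have h2 : (((i+1 : ℕ) : Fin (m+2)) : ℕ) = i + 1 := Fin.val_cast_of_lt (by omega)
    rw [Sym2.eq_iff] at hei
    rcases hei with ⟨hl, hr⟩ | ⟨hl, hr⟩
    · have hi0 : i = 0 := by
        have := congrArg Fin.val hl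
        rw [h1] at this
        simpa using this.symm
      subst hi0
      rw [hr]
      norm_num
    · exfalso
      have := congrArg Fin.val hl
      rw [h2] at this
      simp at this
  · rintro rfl
    refine ⟨?_, 0, rfl, 1, ?_, rfl⟩
    · rw [mem_pathE]
      exact ⟨0, Nat.zero_le _, by norm_num⟩
    · exact one_ne_zero

open Filter in
lemma second_part (n : ℕ) : ∃ γ : ℝ, 0 < γ ∧ γ < 1 ∧
    ∃ (m : ℕ) (E : Finset (Sym2 (Fin m))),
      (∀ e ∈ E, ¬ e.IsDiag) ∧
      ∃ Γ : Finpartition (univ : Finset (Fin m)),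
        (∀ P : Finpartition (univ : Finset (Fin m)), cpm γ E P ≤ cpm γ E Γ) ∧
        ∃ c ∈ Γ.parts, n ≤ c.card ∧
          ∃ A B : Finset (Fin m), A.Nonempty ∧ B.Nonempty ∧ Disjoint A B ∧
            A ∪ B = c ∧ (cutEdges E A B).card = 1 := by
  have hC1 : 1 ≤ ((n+2).choose 2 : ℝ) := by
    exact_mod_cast Nat.choose_pos (by omega : 2 ≤ n + 2)
  set C : ℝ := ((n+2).choose 2 : ℝ) with hCdef
  refine ⟨1 / (C + 1), by positivity, ?_, n + 2, pathE n, pathE_not_diag,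
    Finpartition.indiscrete (Finset.univ_nonempty.ne_empty), ?_, univ, by simp, by simp, ?_⟩
  · rw [div_lt_one (by linarith)]; linarith
  · intro P
    refine indiscrete_opt _ (by positivity) ?_ P
    rw [div_mul_eq_mul_div, one_mul, div_le_one (by linarith)]
    linarith
  · refine ⟨{0}, univ \ {0}, singleton_nonempty _, ⟨1, ?_⟩, Finset.disjoint_sdiff,
      union_sdiff_of_subset (subset_univ _), ?_⟩
    · simp
    · rw [cutEdges_path]; exact card_singleton _

open Filter in

/-- there is no single non-negative non-decreasing function `f` tending to
infinity such that, for every `γ ∈ (0,1)`, every cluster of size `n` in every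
CPM(γ)-optimal clustering of every network has minimum edge cut size strictly greater
than `f n`.  In particular, for every `n` there exist `γ ∈ (0,1)` and a network with a
CPM(γ)-optimal clustering containing a cluster of size `≥ n` with a cut edge (a
bipartition crossed by exactly one edge). -/
theorem stmt_8 :
    (¬ ∃ f : ℕ → ℝ, Monotone f ∧ Tendsto f atTop atTop ∧ (∀ n, 0 ≤ f n) ∧
      ∀ γ : ℝ, 0 < γ → γ < 1 →
        ∀ (m : ℕ) (E : Finset (Sym2 (Fin m))),
          (∀ e ∈ E, ¬ e.IsDiag) →
          ∀ Γ : Finpartition (univ : Finset (Fin m)),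
            (∀ P : Finpartition (univ : Finset (Fin m)), cpm γ E P ≤ cpm γ E Γ) →
            ∀ c ∈ Γ.parts, ∀ A B : Finset (Fin m),
              A.Nonempty → B.Nonempty → Disjoint A B → A ∪ B = c →
              f c.card < ((cutEdges E A B).card : ℝ)) ∧
    (∀ n : ℕ, ∃ γ : ℝ, 0 < γ ∧ γ < 1 ∧
      ∃ (m : ℕ) (E : Finset (Sym2 (Fin m))),
        (∀ e ∈ E, ¬ e.IsDiag) ∧
        ∃ Γ : Finpartition (univ : Finset (Fin m)),
          (∀ P : Finpartition (univ : Finset (Fin m)), cpm γ E P ≤ cpm γ E Γ) ∧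
          ∃ c ∈ Γ.parts, n ≤ c.card ∧
            ∃ A B : Finset (Fin m), A.Nonempty ∧ B.Nonempty ∧ Disjoint A B ∧
              A ∪ B = c ∧ (cutEdges E A B).card = 1) := by
  refine ⟨?_, second_part⟩
  rintro ⟨f, hmono, htend, hnn, hf⟩
  obtain ⟨N, hN⟩ := (htend.eventually_ge_atTop 1).exists_forall_of_atTop
  obtain ⟨γ, hγ0, hγ1, m, E, hE, Γ, hopt, c, hc, hcard, A, B, hA, hB, hAB, hU, hcut⟩ :=
    second_part N
  have h1 : (1 : ℝ) ≤ f c.card := hN _ hcard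
  have h2 : f c.card < ((cutEdges E A B).card : ℝ) :=
    hf γ hγ0 hγ1 m E hE Γ hopt c hc A B hA hB hAB hU
  rw [hcut] at h2
  norm_num at h2
  linarith
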